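/- For each integer c ≥ 2, let A_c be the family of all c(c−1) partial permutations placing values 1 and 2 at two distinct positions among {1,…,c} (with c−2 blanks). Then the independence number of the conflict graph H_{A_c} equals ⌊c/2⌋·⌈c/2⌉, and hence α(H_{A_c})/|A_c| = ⌊c/2⌋·⌈c/2⌉/(c(c−1)) → 1/4 as c → ∞. -/

import Mathlib

def validPerm2 {c : ℕ} (f : Fin c → Option (Fin 2)) : Prop :=
  ∀ v : Fin 2, ∃! i, f i = some v

def conflict {c : ℕ} (f g : Fin c → Option (Fin 2)) : Prop :=
  ∃ i, (f i = some 0 ∧ g i = some 1) ∨ (f i = some 1 ∧ g i = some 0)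

/-- The partial permutation placing `0` at `a` and `1` at `b`. -/
def mk2 {c : ℕ} (a b : Fin c) : Fin c → Option (Fin 2) :=
  fun i => if i = a then some 0 else if i = b then some 1 else none

lemma mk2_self0 {c : ℕ} (a b : Fin c) : mk2 a b a = some 0 := if_pos rfl

lemma mk2_self1 {c : ℕ} {a b : Fin c} (h : b ≠ a) : mk2 a b b = some 1 := by
  simp [mk2, h]

lemma mk2_some0 {c : ℕ} {a b i : Fin c} (h : mk2 a b i = some 0) : i = a := by
  unfold mk2 at h
  split_ifs at h with h1 h2
  · exact h1
  · exact absurd h (by decide)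

lemma mk2_some1 {c : ℕ} {a b i : Fin c} (h : mk2 a b i = some 1) : i = b := by
  unfold mk2 at h
  split_ifs at h with h1 h2
  · exact absurd h (by decide)
  · exact h2

lemma mk2_valid {c : ℕ} {a b : Fin c} (hab : a ≠ b) : validPerm2 (mk2 a b) := by
  intro v
  fin_cases v
  · exact ⟨a, mk2_self0 a b, fun y hy => mk2_some0 hy⟩
  · exact ⟨b, mk2_self1 (Ne.symm hab), fun y hy => mk2_some1 hy⟩

lemma valid_rep {c : ℕ} {f : Fin c → Option (Fin 2)} {a b : Fin c}
    (h0 : f a = some 0) (h1 : f b = some 1)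
    (u0 : ∀ i, f i = some 0 → i = a) (u1 : ∀ i, f i = some 1 → i = b) :
    f = mk2 a b := by
  funext i
  rcases hfi : f i with _ | v
  · unfold mk2
    split_ifs with g1 g2
    · rw [g1, h0] at hfi; exact absurd hfi (by simp)
    · rw [g2, h1] at hfi; exact absurd hfi (by simp)
    · rfl
  · fin_cases v
    · rw [u0 i hfi, mk2_self0]
      rfl
    · have hba : b ≠ a := by
        intro h; rw [h, h0] at h1; exact absurd h1 (by decide)
      rw [u1 i hfi, mk2_self1 hba]
      rfl

lemma mk2_inj {c : ℕ} {a b a' b' : Fin c} (h1 : a ≠ b) (h : mk2 a b = mk2 a' b') :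
    a = a' ∧ b = b' := by
  have ha : mk2 a' b' a = some 0 := (congrFun h a).symm.trans (mk2_self0 a b)
  have hb : mk2 a' b' b = some 1 := (congrFun h b).symm.trans (mk2_self1 (Ne.symm h1))
  exact ⟨mk2_some0 ha, mk2_some1 hb⟩

/-- Valid partial permutations correspond to embeddings `Fin 2 ↪ Fin c`. -/
noncomputable def validEquiv (c : ℕ) :
    {f : Fin c → Option (Fin 2) // validPerm2 f} ≃ (Fin 2 ↪ Fin c) where
  toFun f := ⟨fun v => (f.2 v).choose, by
    intro v w h
    have h' : (f.2 v).choose = (f.2 w).choose := h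
    have hv : f.1 ((f.2 v).choose) = some v := (f.2 v).choose_spec.1
    have hw : f.1 ((f.2 w).choose) = some w := (f.2 w).choose_spec.1
    rw [h', hw] at hv
    exact Option.some_injective _ hv.symm⟩
  invFun e := ⟨mk2 (e 0) (e 1),
    mk2_valid (fun h => absurd (e.injective h) (by decide))⟩
  left_inv f := by
    apply Subtype.ext
    exact (valid_rep (f.2 0).choose_spec.1 (f.2 1).choose_spec.1
      (fun i hi => (f.2 0).choose_spec.2 i hi)
      (fun i hi => (f.2 1).choose_spec.2 i hi)).symm
  right_inv e := by
    have hne : e 1 ≠ e 0 := fun h => absurd (e.injective h) (by decide)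
    apply Function.Embedding.ext
    intro v
    fin_cases v
    · exact ((mk2_valid (fun h => absurd (e.injective h) (by decide)) 0).choose_spec.2
        (e 0) (mk2_self0 (e 0) (e 1))).symm
    · exact ((mk2_valid (fun h => absurd (e.injective h) (by decide)) 1).choose_spec.2
        (e 1) (mk2_self1 hne)).symm

lemma nat_prod_bound {x y c : ℕ} (h : x + y ≤ c) : x * y ≤ c / 2 * ((c + 1) / 2) := by
  rcases Nat.even_or_odd c with ⟨k, hk⟩ | ⟨k, hk⟩
  · rw [show c / 2 = k by omega, show (c + 1) / 2 = k by omega]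
    have hz : (x:ℤ) * y ≤ (k:ℤ) * k := by
      have h2 : (x:ℤ) + y ≤ (k:ℤ) + k := by exact_mod_cast (by omega : x + y ≤ k + k)
      nlinarith [sq_nonneg ((x:ℤ) - y)]
    exact_mod_cast hz
  · rw [show c / 2 = k by omega, show (c + 1) / 2 = k + 1 by omega]
    have hz : (x:ℤ) * y ≤ (k:ℤ) * (k+1) := by
      have h2 : (x:ℤ) + y ≤ 2*(k:ℤ)+1 := by exact_mod_cast (by omega : x + y ≤ 2*k+1)
      have h4 : 4*((x:ℤ)*y) < 4*((k:ℤ)*(k+1)+1) := by nlinarith [sq_nonneg ((x:ℤ) - y)]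
      have h5 := lt_of_mul_lt_mul_left h4 (by norm_num : (0:ℤ) ≤ 4)
      exact Int.lt_add_one_iff.mp h5
    exact_mod_cast hz

lemma sq_bounds (m : ℕ) :
    4 * (m / 2 * ((m + 1) / 2)) ≤ m * m ∧ m * m ≤ 4 * (m / 2 * ((m + 1) / 2)) + 1 := by
  rcases Nat.even_or_odd m with ⟨k, hk⟩ | ⟨k, hk⟩
  · rw [show m / 2 = k by omega, show (m + 1) / 2 = k by omega]
    constructor <;> nlinarith
  · rw [show m / 2 = k by omega, show (m + 1) / 2 = k + 1 by omega]
    constructor <;> nlinarith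

lemma tendsto_quarter :
    Filter.Tendsto
      (fun m : ℕ => (((m / 2) * ((m + 1) / 2) : ℕ) : ℝ) / ((m : ℝ) * ((m : ℝ) - 1)))
      Filter.atTop (nhds (1 / 4)) := by
  have hinv : Filter.Tendsto (fun m : ℕ => ((m : ℝ))⁻¹) Filter.atTop (nhds 0) :=
    (tendsto_natCast_atTop_atTop (R := ℝ)).inv_tendsto_atTop
  have hinv' : Filter.Tendsto (fun m : ℕ => ((m : ℝ) - 1)⁻¹) Filter.atTop (nhds 0) := by
    have h1 : Filter.Tendsto (fun m : ℕ => (m : ℝ) + (-1)) Filter.atTop Filter.atTop :=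
      Filter.tendsto_atTop_add_const_right Filter.atTop (-1)
        (tendsto_natCast_atTop_atTop (R := ℝ))
    have := h1.inv_tendsto_atTop
    exact this.congr (fun m => by simp [sub_eq_add_neg])
  have hg : Filter.Tendsto (fun m : ℕ => ((m : ℝ) + 1) / (4 * m)) Filter.atTop
      (nhds (1 / 4)) := by
    have h1 : Filter.Tendsto (fun m : ℕ => 1 / 4 + (1 / 4) * ((m : ℝ))⁻¹)
        Filter.atTop (nhds (1 / 4 + (1 / 4) * 0)) :=
      tendsto_const_nhds.add (hinv.const_mul _)
    rw [mul_zero, add_zero] at h1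
    apply h1.congr'
    filter_upwards [Filter.eventually_ge_atTop 1] with m hm
    have hm' : (m : ℝ) ≠ 0 := by positivity
    field_simp
  have hh : Filter.Tendsto (fun m : ℕ => (m : ℝ) / (4 * ((m : ℝ) - 1))) Filter.atTop
      (nhds (1 / 4)) := by
    have h1 : Filter.Tendsto (fun m : ℕ => 1 / 4 + (1 / 4) * ((m : ℝ) - 1)⁻¹)
        Filter.atTop (nhds (1 / 4 + (1 / 4) * 0)) :=
      tendsto_const_nhds.add (hinv'.const_mul _)
    rw [mul_zero, add_zero] at h1
    apply h1.congr'
    filter_upwards [Filter.eventually_ge_atTop 2] with m hm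
    have hm' : (m : ℝ) - 1 ≠ 0 := by
      have : (2 : ℝ) ≤ (m : ℝ) := by exact_mod_cast hm
      linarith
    field_simp
    ring
  refine tendsto_of_tendsto_of_tendsto_of_le_of_le' hg hh ?_ ?_
  · filter_upwards [Filter.eventually_ge_atTop 2] with m hm
    have hM : (2 : ℝ) ≤ (m : ℝ) := by exact_mod_cast hm
    have hb := (sq_bounds m).2
    have hb' : ((m : ℝ)) * m ≤ 4 * (((m / 2) * ((m + 1) / 2) : ℕ) : ℝ) + 1 := by
      exact_mod_cast hb
    rw [div_le_div_iff₀ (by linarith) (by nlinarith)]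
    nlinarith
  · filter_upwards [Filter.eventually_ge_atTop 2] with m hm
    have hM : (2 : ℝ) ≤ (m : ℝ) := by exact_mod_cast hm
    have hb := (sq_bounds m).1
    have hb' : 4 * (((m / 2) * ((m + 1) / 2) : ℕ) : ℝ) ≤ (m : ℝ) * m := by
      exact_mod_cast hb
    rw [div_le_div_iff₀ (by nlinarith) (by linarith)]
    nlinarith

/-- For `A_c`, the family of all `c(c−1)` partial permutations of `{1,2}` among
`c` positions, the independence number of the conflict graph is exactly
`⌊c/2⌋·⌈c/2⌉`, and the ratio `α(H_{A_c})/|A_c|` tends to `1/4`. -/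
theorem stmt18 (c : ℕ) (hc : 2 ≤ c) :
    ({f : Fin c → Option (Fin 2) | validPerm2 f}).ncard = c * (c - 1) ∧
    (∃ T : Finset (Fin c → Option (Fin 2)), (∀ f ∈ T, validPerm2 f) ∧
      (T : Set (Fin c → Option (Fin 2))).Pairwise (fun f g => ¬ conflict f g) ∧
      T.card = (c / 2) * ((c + 1) / 2)) ∧
    (∀ T : Finset (Fin c → Option (Fin 2)), (∀ f ∈ T, validPerm2 f) →
      (T : Set (Fin c → Option (Fin 2))).Pairwise (fun f g => ¬ conflict f g) →
      T.card ≤ (c / 2) * ((c + 1) / 2)) ∧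
    Filter.Tendsto
      (fun m : ℕ => (((m / 2) * ((m + 1) / 2) : ℕ) : ℝ) / ((m : ℝ) * ((m : ℝ) - 1)))
      Filter.atTop (nhds (1 / 4)) := by
  classical
  refine ⟨?_, ?_, ?_, tendsto_quarter⟩
  · -- counting
    rw [← Nat.card_coe_set_eq]
    have h1 : Nat.card ↥{f : Fin c → Option (Fin 2) | validPerm2 f}
        = Nat.card (Fin 2 ↪ Fin c) := Nat.card_congr (validEquiv c)
    rw [h1, Nat.card_eq_fintype_card, Fintype.card_embedding_eq, Fintype.card_fin,
      Fintype.card_fin]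
    simp [Nat.descFactorial_succ, Nat.descFactorial_zero, Nat.mul_comm]
  · -- construction of a large independent set
    set F : Fin (c / 2) × Fin ((c + 1) / 2) → (Fin c → Option (Fin 2)) :=
      fun p => mk2 ⟨p.1, lt_of_lt_of_le p.1.isLt (Nat.div_le_self c 2)⟩
        ⟨c / 2 + p.2, by have := p.2.isLt; omega⟩ with hF
    have hne : ∀ p : Fin (c / 2) × Fin ((c + 1) / 2),
        (⟨p.1, lt_of_lt_of_le p.1.isLt (Nat.div_le_self c 2)⟩ : Fin c) ≠
        ⟨c / 2 + p.2, by have := p.2.isLt; omega⟩ := by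
      intro p h
      have := congrArg Fin.val h
      simp at this
      have := p.1.isLt
      omega
    refine ⟨Finset.image F Finset.univ, ?_, ?_, ?_⟩
    · intro f hf
      simp only [Finset.mem_image] at hf
      obtain ⟨p, _, rfl⟩ := hf
      exact mk2_valid (hne p)
    · intro f hf g hg hfg hcon
      simp only [Finset.coe_image, Set.mem_image] at hf hg
      obtain ⟨p, _, rfl⟩ := hf
      obtain ⟨q, _, rfl⟩ := hg
      obtain ⟨i, hi⟩ := hcon
      rcases hi with ⟨h0, h1⟩ | ⟨h0, h1⟩
      · have e0 := mk2_some0 h0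
        have e1 := mk2_some1 h1
        rw [e0] at e1
        have := congrArg Fin.val e1
        simp at this
        have := p.1.isLt
        omega
      · have e0 := mk2_some1 h0
        have e1 := mk2_some0 h1
        rw [e0] at e1
        have := congrArg Fin.val e1
        simp at this
        have := q.1.isLt
        omega
    · have hinj : Function.Injective F := by
        intro p q h
        obtain ⟨ha, hb⟩ := mk2_inj (hne p) h
        have ha' := congrArg Fin.val ha
        have hb' := congrArg Fin.val hb
        simp at ha' hb'
        have h1 : p.1 = q.1 := Fin.ext ha'
        have h2 : p.2 = q.2 := Fin.ext (by omega)
        exact Prod.ext h1 h2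
      rw [Finset.card_image_of_injective _ hinj, Finset.card_univ]
      simp
  · -- upper bound
    intro T hval hpair
    have hc0 : 0 < c := by omega
    set pa : (Fin c → Option (Fin 2)) → Fin c :=
      fun f => if h : ∃ i, f i = some 0 then h.choose else ⟨0, hc0⟩ with hpa
    set pb : (Fin c → Option (Fin 2)) → Fin c :=
      fun f => if h : ∃ i, f i = some 1 then h.choose else ⟨0, hc0⟩ with hpb
    have hpa0 : ∀ f ∈ T, f (pa f) = some 0 := by
      intro f hf
      have hex : ∃ i, f i = some 0 := (hval f hf 0).exists
      simp only [hpa, dif_pos hex]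
      exact hex.choose_spec
    have hpb1 : ∀ f ∈ T, f (pb f) = some 1 := by
      intro f hf
      have hex : ∃ i, f i = some 1 := (hval f hf 1).exists
      simp only [hpb, dif_pos hex]
      exact hex.choose_spec
    have hua : ∀ f ∈ T, ∀ i, f i = some 0 → i = pa f := by
      intro f hf i hi
      exact ((hval f hf 0).unique hi (hpa0 f hf))
    have hub : ∀ f ∈ T, ∀ i, f i = some 1 → i = pb f := by
      intro f hf i hi
      exact ((hval f hf 1).unique hi (hpb1 f hf))
    have hrep : ∀ f ∈ T, f = mk2 (pa f) (pb f) := by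
      intro f hf
      exact valid_rep (hpa0 f hf) (hpb1 f hf) (hua f hf) (hub f hf)
    set A := T.image pa with hA
    set B := T.image pb with hB
    have hdisj : Disjoint A B := by
      rw [Finset.disjoint_left]
      intro x hxA hxB
      obtain ⟨f, hf, rfl⟩ := Finset.mem_image.mp hxA
      obtain ⟨g, hg, hgx⟩ := Finset.mem_image.mp hxB
      have h0 : f (pa f) = some 0 := hpa0 f hf
      have h1 : g (pa f) = some 1 := by rw [← hgx]; exact hpb1 g hg
      by_cases hfg : f = g
      · subst hfg
        rw [h0] at h1
        exact absurd h1 (by decide)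
      · exact hpair hf hg hfg ⟨pa f, Or.inl ⟨h0, h1⟩⟩
    have hsum : A.card + B.card ≤ c := by
      rw [← Finset.card_union_of_disjoint hdisj]
      calc (A ∪ B).card ≤ Fintype.card (Fin c) := Finset.card_le_univ _
        _ = c := Fintype.card_fin c
    have hle : T.card ≤ A.card * B.card := by
      rw [← Finset.card_product]
      apply Finset.card_le_card_of_injOn (fun f => (pa f, pb f))
      · intro f hf
        exact Finset.mem_product.mpr
          ⟨Finset.mem_image_of_mem _ hf, Finset.mem_image_of_mem _ hf⟩
      · intro f hf g hg h
        simp only [Prod.mk.injEq] at h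
        rw [hrep f hf, hrep g hg, h.1, h.2]
    exact hle.trans (nat_prod_bound hsum)
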